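/- If C ⊆ Fⁿ is a doubly-even code over F = F_{2^f}, then cwe(C) is invariant under each diagonal substitution d_r(x_a) = i^{φ(ar)} x_a for r ∈ F, where i = √−1 and φ is the mod-4 weight with respect to a self-complementary basis. -/

import Mathlib

open Finset MvPolynomial

/-- The doubling map `ZMod 2 →+ ZMod 4`. -/
def dbl : ZMod 2 →+ ZMod 4 where
  toFun u := 2 * (u.val : ZMod 4)
  map_zero' := by decide
  map_add' := by decide

lemma val4_add (u v : ZMod 2) :
    (((u + v).val : ZMod 4)) = (u.val : ZMod 4) + (v.val : ZMod 4) + dbl (u * v) := by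
  revert u v; decide

lemma I_pow_of_cast_zero (k : ℕ) (h : (k : ZMod 4) = 0) : Complex.I ^ k = 1 := by
  obtain ⟨m, rfl⟩ := (ZMod.natCast_eq_zero_iff k 4).mp h
  rw [pow_mul, Complex.I_pow_four, one_pow]

lemma pair_sum_eq {F : Type*} [CommRing F] {n : ℕ} (g : Fin n → F) :
    ∑ p ∈ univ.filter (fun p : Fin n × Fin n => p.1 < p.2), g p.1 * g p.2 =
      ∑ i, ∑ j ∈ Finset.Ioi i, g i * g j := by
  rw [Finset.sum_filter, Fintype.sum_prod_type]
  refine Finset.sum_congr rfl fun i _ => ?_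
  rw [← Finset.sum_filter]
  congr 1
  ext j; simp

/-- The complete weight enumerator of a code `C ⊆ Fⁿ`. -/
noncomputable def cwe {F : Type*} [Field F] [Fintype F] {n : ℕ}
    (C : Submodule F (Fin n → F)) [DecidablePred (· ∈ C)] : MvPolynomial F ℂ :=
  ∑ c ∈ Finset.univ.filter (fun c : Fin n → F => c ∈ C), ∏ i, MvPolynomial.X (c i)

theorem stmt_16 {F : Type*} [Field F] [Fintype F] [Algebra (ZMod 2) F] {f n : ℕ}
    (hcard : Fintype.card F = 2 ^ f)
    (b : Module.Basis (Fin f) (ZMod 2) F)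
    (hb : ∀ i j, Algebra.trace (ZMod 2) F (b i * b j) = if i = j then 1 else 0)
    (φ : F → ZMod 4)
    (hφ : ∀ a, φ a = ∑ i, ((b.repr a i).val : ZMod 4))
    (C : Submodule F (Fin n → F)) [DecidablePred (· ∈ C)]
    (hde : ∀ c ∈ C, (∑ i, c i) = 0 ∧
      ∑ p ∈ univ.filter (fun p : Fin n × Fin n => p.1 < p.2), c p.1 * c p.2 = 0) :
    ∀ r : F,
      (MvPolynomial.aeval fun a : F =>
          MvPolynomial.C (Complex.I ^ (φ (a * r)).val) * MvPolynomial.X a :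
        MvPolynomial F ℂ →ₐ[ℂ] MvPolynomial F ℂ) (cwe C) = cwe C := by
  intro r
  -- `T x = 2 * trace x` as an additive map `F →+ ZMod 4`
  set T : F →+ ZMod 4 :=
    dbl.comp (Algebra.trace (ZMod 2) F).toAddMonoidHom with hT
  have hφ0 : φ 0 = 0 := by simp [hφ]
  -- trace of a product in terms of coordinates
  have htr : ∀ a c : F, Algebra.trace (ZMod 2) F (a * c) = ∑ i, b.repr a i * b.repr c i := by
    intro a c
    conv_lhs => rw [← b.sum_repr a, ← b.sum_repr c, Finset.sum_mul_sum]
    rw [map_sum]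
    refine Finset.sum_congr rfl fun i _ => ?_
    rw [map_sum]
    have : ∀ j, Algebra.trace (ZMod 2) F (b.repr a i • b i * b.repr c j • b j)
        = b.repr a i * b.repr c j * (if i = j then 1 else 0) := by
      intro j
      rw [smul_mul_smul_comm, map_smul, smul_eq_mul, hb]
    simp only [this, mul_ite, mul_one, mul_zero]
    simp
  -- additivity defect of φ
  have hφadd : ∀ a c : F, φ (a + c) = φ a + φ c + T (a * c) := by
    intro a c
    have : T (a * c) = ∑ i, dbl (b.repr a i * b.repr c i) := by
      rw [hT]; simp only [AddMonoidHom.comp_apply, LinearMap.toAddMonoidHom_coe, htr a c,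
        map_sum]
    rw [this, hφ, hφ a, hφ c, ← Finset.sum_add_distrib, ← Finset.sum_add_distrib]
    refine Finset.sum_congr rfl fun i _ => ?_
    rw [map_add, Finsupp.add_apply, val4_add]
  -- the key identity
  have key : ∀ m (c : Fin m → F),
      ∑ i, φ (c i) = φ (∑ i, c i) + T (∑ i, ∑ j ∈ Finset.Ioi i, c i * c j) := by
    intro m
    induction m with
    | zero => intro c; simp [hφ0]
    | succ m ih =>
      intro c
      rw [Fin.sum_univ_succ (f := fun i => φ (c i)), ih (fun i => c i.succ)]
      have h1 : ∑ i : Fin (m + 1), c i = c 0 + ∑ i : Fin m, c i.succ := Fin.sum_univ_succ c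
      have h2 : ∑ i : Fin (m + 1), ∑ j ∈ Finset.Ioi i, c i * c j
          = c 0 * (∑ i : Fin m, c i.succ)
            + ∑ i : Fin m, ∑ j ∈ Finset.Ioi i, c i.succ * c j.succ := by
        rw [Fin.sum_univ_succ (f := fun i => ∑ j ∈ Finset.Ioi i, c i * c j)]
        congr 1
        · rw [Fin.sum_Ioi_zero, Finset.mul_sum]
        · exact Finset.sum_congr rfl fun i _ => Fin.sum_Ioi_succ _ i
      rw [h1, h2, hφadd (c 0) (∑ i : Fin m, c i.succ), map_add, Finset.mul_sum]
      have hdbl2 : ∀ u : ZMod 2, dbl u + dbl u = 0 := by decide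
      have h3 : T (∑ x : Fin m, c 0 * c x.succ) + T (∑ x : Fin m, c 0 * c x.succ) = 0 := by
        rw [hT]; exact hdbl2 _
      linear_combination -h3
  -- conclusion: Φ(r·c) = 0 for c ∈ C
  have main : ∀ c : Fin n → F, c ∈ C → (∑ i, φ (c i * r)) = 0 := by
    intro c hc
    obtain ⟨h1, h2⟩ := hde c hc
    rw [key n (fun i => c i * r)]
    have e1 : ∑ i, c i * r = 0 := by rw [← Finset.sum_mul, h1, zero_mul]
    have e2 : ∑ i, ∑ j ∈ Finset.Ioi i, (c i * r) * (c j * r) = 0 := by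
      have : ∀ i : Fin n, ∑ j ∈ Finset.Ioi i, (c i * r) * (c j * r)
          = (∑ j ∈ Finset.Ioi i, c i * c j) * (r * r) := by
        intro i; rw [Finset.sum_mul]; exact Finset.sum_congr rfl fun j _ => by ring
      simp only [this]
      rw [← Finset.sum_mul, ← pair_sum_eq, h2, zero_mul]
    rw [e1, e2, hφ0, map_zero, zero_add]
  -- now compute the action of the substitution
  unfold cwe
  rw [map_sum]
  refine Finset.sum_congr rfl fun c hc => ?_
  rw [map_prod]
  simp only [aeval_X]
  rw [Finset.prod_mul_distrib, ← map_prod, Finset.prod_pow_eq_pow_sum]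
  have hcC : c ∈ C := (Finset.mem_filter.mp hc).2
  have : ((∑ i, (φ (c i * r)).val : ℕ) : ZMod 4) = 0 := by
    push_cast
    simp only [ZMod.natCast_val, ZMod.cast_id]
    exact main c hcC
  rw [I_pow_of_cast_zero _ this, map_one, one_mul]
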